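/- Let H be a real inner product space, let v, w ∈ H with v ≠ w, and let R > 0, G > 0, α ∈ (0,2) be real constants such that ⟨v, w⟩ ≤ −R‖v‖ and ‖v − w‖ ≤ G. Define the exact line-search step λ = ⟨v, v−w⟩ / ‖v−w‖². Then ‖v + αλ(w − v)‖² ≤ (1 − α(2−α)R²/G²)·‖v‖². -/

import Mathlib

open scoped RealInnerProductSpace

/-- Inexact line-search step: scaling the exact line-search step
`λ = ⟪v, v−w⟫/‖v−w‖²` by a factor `α ∈ (0,2)` still gives a geometric
per-step contraction of the squared residual. -/
theorem stmt_3 {H : Type*} [NormedAddCommGroup H] [InnerProductSpace ℝ H]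
    (v w : H) (hvw : v ≠ w) (R G α : ℝ)
    (hR : 0 < R) (hG : 0 < G) (hα : α ∈ Set.Ioo (0 : ℝ) 2)
    (hor : ⟪v, w⟫ ≤ -(R * ‖v‖)) (hD : ‖v - w‖ ≤ G) :
    ‖v + (α * (⟪v, v - w⟫ / ‖v - w‖ ^ 2)) • (w - v)‖ ^ 2
      ≤ (1 - α * (2 - α) * R ^ 2 / G ^ 2) * ‖v‖ ^ 2 := by
  obtain ⟨hα0, hα2⟩ := hα
  have hd0 : v - w ≠ 0 := sub_ne_zero.mpr hvw
  have hDpos : (0:ℝ) < ‖v - w‖ := norm_pos_iff.mpr hd0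
  set c := ⟪v, v - w⟫ with hc
  have hc' : c = ‖v‖^2 - ⟪v, w⟫ := by
    simp [hc, inner_sub_right, real_inner_self_eq_norm_sq]
  have hcge : R * ‖v‖ ≤ c := by nlinarith [norm_nonneg v]
  have hc0 : (0:ℝ) ≤ c := le_trans (by positivity) hcge
  set t := α * (c / ‖v - w‖ ^ 2) with ht
  have hexp : ‖v + t • (w - v)‖^2 = ‖v‖^2 - 2*(t*c) + t^2*‖v - w‖^2 := by
    have h1 : v + t • (w - v) = v - t • (v - w) := by
      rw [← neg_sub v w, smul_neg, ← sub_eq_add_neg]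
    rw [h1, norm_sub_sq_real, real_inner_smul_right, norm_smul]
    simp [hc, mul_pow, abs_mul_abs_self]
  rw [hexp]
  have hteq : t^2 * ‖v - w‖^2 = α^2 * (c^2 / ‖v - w‖^2) := by
    rw [ht]; field_simp
  have htc : t * c = α * (c^2 / ‖v - w‖^2) := by
    rw [ht]; field_simp
  rw [hteq, htc]
  have hcc : R^2 * ‖v‖^2 ≤ c^2 := by nlinarith [mul_le_mul hcge hcge (by positivity : (0:ℝ) ≤ R * ‖v‖) hc0]
  have hGG : ‖v - w‖^2 ≤ G^2 := by nlinarith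
  have hfrac : R^2/G^2 * ‖v‖^2 ≤ c^2 / ‖v - w‖^2 := by
    rw [div_mul_eq_mul_div, div_le_div_iff₀ (by positivity) (by positivity)]
    nlinarith [mul_le_mul_of_nonneg_right hcc (sq_nonneg ‖v - w‖),
      mul_le_mul_of_nonneg_left hGG (sq_nonneg c)]
  have hpos : (0:ℝ) < α * (2 - α) := mul_pos hα0 (by linarith)
  have key := mul_le_mul_of_nonneg_left hfrac hpos.le
  have hX : α * (2 - α) * R ^ 2 / G ^ 2 * ‖v‖ ^ 2 ≤ α * (2 - α) * (c ^ 2 / ‖v - w‖ ^ 2) := by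
    calc α * (2 - α) * R ^ 2 / G ^ 2 * ‖v‖ ^ 2
        = α * (2 - α) * (R ^ 2 / G ^ 2 * ‖v‖ ^ 2) := by ring
      _ ≤ _ := key
  have hexpand : (1 - α * (2 - α) * R ^ 2 / G ^ 2) * ‖v‖ ^ 2
      = ‖v‖ ^ 2 - α * (2 - α) * R ^ 2 / G ^ 2 * ‖v‖ ^ 2 := by ring
  have heq : 2 * (α * (c ^ 2 / ‖v - w‖ ^ 2)) - α ^ 2 * (c ^ 2 / ‖v - w‖ ^ 2)
      = α * (2 - α) * (c ^ 2 / ‖v - w‖ ^ 2) := by ring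
  rw [hexpand]
  linarith [hX, heq]
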